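/- Let K be a field complete with respect to a nontrivial nonarchimedean absolute value |·|, and let W be a Weierstrass curve y² + a₁xy + a₃y = x³ + a₂x² + a₄x + a₆ over K whose coefficients satisfy |aᵢ| ≤ 1 and whose discriminant Δ satisfies |Δ| = 1 (good reduction). Let P, Q ∈ W(K) be two distinct points, both different from the point at infinity O (so that P − Q ≠ O). Writing x(R) for the x-coordinate of an affine point R, one has max(|x(P − Q)|, 1) ≥ min( max(|x(P)|, 1), max(|x(Q)|, 1) ). Equivalently, for the local height λ(R) = (1/2)·max(log|x(R)|, 0) one has λ(P − Q) ≥ min(λ(P), λ(Q)). -/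

import Mathlib

open WeierstrassCurve.Affine WeierstrassCurve.Affine.Point

section helpers

variable {K : Type*} [NontriviallyNormedField K]

private lemma na_add_le (hna : IsNonarchimedean (norm : K → ℝ)) {t : ℝ} {u v : K}
    (hu : ‖u‖ ≤ t) (hv : ‖v‖ ≤ t) : ‖u + v‖ ≤ t :=
  le_trans (hna u v) (max_le hu hv)

private lemma na_add_lt (hna : IsNonarchimedean (norm : K → ℝ)) {t : ℝ} {u v : K}
    (hu : ‖u‖ < t) (hv : ‖v‖ < t) : ‖u + v‖ < t :=
  lt_of_le_of_lt (hna u v) (max_lt hu hv)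

private lemma na_eq (hna : IsNonarchimedean (norm : K → ℝ)) {u v : K}
    (h : ‖v‖ < ‖u‖) : ‖u + v‖ = ‖u‖ := by
  refine le_antisymm (le_trans (hna u v) (max_le le_rfl h.le)) ?_
  have h2 : ‖u‖ ≤ max ‖u + v‖ ‖v‖ := by
    have := hna (u + v) (-v)
    simpa using this
  rcases max_cases ‖u + v‖ ‖v‖ with ⟨he, _⟩ | ⟨he, _⟩
  · rw [he] at h2; exact h2
  · rw [he] at h2; exact absurd h2 (not_le.mpr h)

variable {W : WeierstrassCurve.Affine K}

private lemma y_small (hna : IsNonarchimedean (norm : K → ℝ))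
    (ha₁ : ‖W.a₁‖ ≤ 1) (ha₂ : ‖W.a₂‖ ≤ 1) (ha₃ : ‖W.a₃‖ ≤ 1)
    (ha₄ : ‖W.a₄‖ ≤ 1) (ha₆ : ‖W.a₆‖ ≤ 1) {x y : K}
    (h : W.Equation x y) (hx : ‖x‖ ≤ 1) : ‖y‖ ≤ 1 := by
  by_contra hy
  push_neg at hy
  have h' := (W.equation_iff x y).mp h
  have heq : y ^ 2 = x ^ 3 + W.a₂ * x ^ 2 + W.a₄ * x + W.a₆ + -(W.a₁ * x * y) + -(W.a₃ * y) := by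
    linear_combination h'
  have hx0 : (0:ℝ) ≤ ‖x‖ := norm_nonneg x
  have hy0 : (0:ℝ) ≤ ‖y‖ := norm_nonneg y
  have b1 : ‖x ^ 3‖ ≤ ‖y‖ := by
    rw [norm_pow]; exact (pow_le_one₀ hx0 hx).trans hy.le
  have b2 : ‖W.a₂ * x ^ 2‖ ≤ ‖y‖ := by
    rw [norm_mul, norm_pow]
    exact (mul_le_one₀ ha₂ (pow_nonneg hx0 2) (pow_le_one₀ hx0 hx)).trans hy.le
  have b3 : ‖W.a₄ * x‖ ≤ ‖y‖ := by
    rw [norm_mul]; exact (mul_le_one₀ ha₄ hx0 hx).trans hy.le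
  have b4 : ‖W.a₆‖ ≤ ‖y‖ := le_trans ha₆ hy.le
  have b5 : ‖-(W.a₁ * x * y)‖ ≤ ‖y‖ := by
    rw [norm_neg, norm_mul, norm_mul]
    exact mul_le_of_le_one_left hy0 (mul_le_one₀ ha₁ hx0 hx)
  have b6 : ‖-(W.a₃ * y)‖ ≤ ‖y‖ := by
    rw [norm_neg, norm_mul]
    exact mul_le_of_le_one_left hy0 ha₃
  have : ‖y‖ ^ 2 ≤ ‖y‖ := by
    rw [← norm_pow, heq]
    exact na_add_le hna (na_add_le hna (na_add_le hna (na_add_le hna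
      (na_add_le hna b1 b2) b3) b4) b5) b6
  nlinarith

private lemma y_big (hna : IsNonarchimedean (norm : K → ℝ))
    (ha₁ : ‖W.a₁‖ ≤ 1) (ha₂ : ‖W.a₂‖ ≤ 1) (ha₃ : ‖W.a₃‖ ≤ 1)
    (ha₄ : ‖W.a₄‖ ≤ 1) (ha₆ : ‖W.a₆‖ ≤ 1) {x y : K}
    (h : W.Equation x y) (hx : 1 < ‖x‖) : ‖y‖ ^ 2 = ‖x‖ ^ 3 := by
  have h' := (W.equation_iff x y).mp h
  have hx0 : (0:ℝ) ≤ ‖x‖ := norm_nonneg x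
  have hy0 : (0:ℝ) ≤ ‖y‖ := norm_nonneg y
  have hx0' : (0:ℝ) < ‖x‖ := lt_trans one_pos hx
  have hX23 : ‖x‖ ^ 2 ≤ ‖x‖ ^ 3 := pow_le_pow_right₀ hx.le (by norm_num)
  have hX13 : ‖x‖ ≤ ‖x‖ ^ 3 := by
    calc ‖x‖ = ‖x‖ ^ 1 := (pow_one _).symm
    _ ≤ ‖x‖ ^ 3 := pow_le_pow_right₀ hx.le (by norm_num)
  have hX03 : (1:ℝ) < ‖x‖ ^ 3 := lt_of_lt_of_le hx hX13
  have hle : ‖y‖ ^ 2 ≤ ‖x‖ ^ 3 := by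
    by_contra hgt
    push_neg at hgt
    have hxy : ‖x‖ < ‖y‖ := by
      refine lt_of_pow_lt_pow_left₀ 2 hy0 ?_
      calc ‖x‖ ^ 2 ≤ ‖x‖ ^ 3 := hX23
      _ < ‖y‖ ^ 2 := hgt
    have hy1 : (1:ℝ) < ‖y‖ := lt_trans hx hxy
    have heq : y ^ 2 = x ^ 3 + W.a₂ * x ^ 2 + W.a₄ * x + W.a₆ + -(W.a₁ * x * y) + -(W.a₃ * y) := by
      linear_combination h'
    have b1 : ‖x ^ 3‖ < ‖y‖ ^ 2 := by rw [norm_pow]; exact hgt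
    have b2 : ‖W.a₂ * x ^ 2‖ < ‖y‖ ^ 2 := by
      rw [norm_mul, norm_pow]
      calc ‖W.a₂‖ * ‖x‖ ^ 2 ≤ ‖x‖ ^ 2 := mul_le_of_le_one_left (pow_nonneg hx0 2) ha₂
      _ ≤ ‖x‖ ^ 3 := hX23
      _ < ‖y‖ ^ 2 := hgt
    have b3 : ‖W.a₄ * x‖ < ‖y‖ ^ 2 := by
      rw [norm_mul]
      calc ‖W.a₄‖ * ‖x‖ ≤ ‖x‖ := mul_le_of_le_one_left hx0 ha₄
      _ ≤ ‖x‖ ^ 3 := hX13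
      _ < ‖y‖ ^ 2 := hgt
    have b4 : ‖W.a₆‖ < ‖y‖ ^ 2 := by nlinarith
    have b5 : ‖-(W.a₁ * x * y)‖ < ‖y‖ ^ 2 := by
      rw [norm_neg, norm_mul, norm_mul]
      calc ‖W.a₁‖ * ‖x‖ * ‖y‖ ≤ ‖x‖ * ‖y‖ :=
        mul_le_mul_of_nonneg_right (mul_le_of_le_one_left hx0 ha₁) hy0
      _ < ‖y‖ * ‖y‖ := mul_lt_mul_of_pos_right hxy (lt_trans one_pos hy1)
      _ = ‖y‖ ^ 2 := (sq ‖y‖).symm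
    have b6 : ‖-(W.a₃ * y)‖ < ‖y‖ ^ 2 := by
      rw [norm_neg, norm_mul]
      calc ‖W.a₃‖ * ‖y‖ ≤ ‖y‖ := mul_le_of_le_one_left hy0 ha₃
      _ < ‖y‖ ^ 2 := by nlinarith
    have : ‖y‖ ^ 2 < ‖y‖ ^ 2 := by
      calc ‖y‖ ^ 2 = ‖y ^ 2‖ := (norm_pow y 2).symm
      _ < ‖y‖ ^ 2 := by
        rw [heq]
        exact na_add_lt hna (na_add_lt hna (na_add_lt hna (na_add_lt hna
          (na_add_lt hna b1 b2) b3) b4) b5) b6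
    exact lt_irrefl _ this
  have hge : ‖x‖ ^ 3 ≤ ‖y‖ ^ 2 := by
    by_contra hgt
    push_neg at hgt
    have heq : x ^ 3 = y ^ 2 + W.a₁ * x * y + W.a₃ * y + -(W.a₂ * x ^ 2) + -(W.a₄ * x)
        + -(W.a₆) := by linear_combination -h'
    have hyx3 : ‖y‖ < ‖x‖ ^ 3 := by
      refine lt_of_pow_lt_pow_left₀ 2 (pow_nonneg hx0 3) ?_
      calc ‖y‖ ^ 2 < ‖x‖ ^ 3 := hgt
      _ ≤ (‖x‖ ^ 3) ^ 2 := by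
          rw [← pow_mul]
          exact pow_le_pow_right₀ hx.le (by norm_num)
    have hxy3 : ‖x‖ * ‖y‖ < ‖x‖ ^ 3 := by
      refine lt_of_pow_lt_pow_left₀ 2 (pow_nonneg hx0 3) ?_
      have h1 : (‖x‖ * ‖y‖) ^ 2 = ‖x‖ ^ 2 * ‖y‖ ^ 2 := by ring
      have h2 : ‖x‖ ^ 2 * ‖y‖ ^ 2 < ‖x‖ ^ 2 * ‖x‖ ^ 3 :=
        mul_lt_mul_of_pos_left hgt (pow_pos hx0' 2)
      have h3 : ‖x‖ ^ 2 * ‖x‖ ^ 3 ≤ (‖x‖ ^ 3) ^ 2 := by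
        rw [← pow_add, ← pow_mul]
        exact pow_le_pow_right₀ hx.le (by norm_num)
      linarith
    have b1 : ‖y ^ 2‖ < ‖x‖ ^ 3 := by rw [norm_pow]; exact hgt
    have b2 : ‖W.a₁ * x * y‖ < ‖x‖ ^ 3 := by
      rw [norm_mul, norm_mul]
      calc ‖W.a₁‖ * ‖x‖ * ‖y‖ ≤ ‖x‖ * ‖y‖ :=
        mul_le_mul_of_nonneg_right (mul_le_of_le_one_left hx0 ha₁) hy0
      _ < ‖x‖ ^ 3 := hxy3
    have b3 : ‖W.a₃ * y‖ < ‖x‖ ^ 3 := by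
      rw [norm_mul]
      calc ‖W.a₃‖ * ‖y‖ ≤ ‖y‖ := mul_le_of_le_one_left hy0 ha₃
      _ < ‖x‖ ^ 3 := hyx3
    have b4 : ‖-(W.a₂ * x ^ 2)‖ < ‖x‖ ^ 3 := by
      rw [norm_neg, norm_mul, norm_pow]
      calc ‖W.a₂‖ * ‖x‖ ^ 2 ≤ ‖x‖ ^ 2 := mul_le_of_le_one_left (pow_nonneg hx0 2) ha₂
      _ < ‖x‖ ^ 3 := by nlinarith
    have b5 : ‖-(W.a₄ * x)‖ < ‖x‖ ^ 3 := by
      rw [norm_neg, norm_mul]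
      calc ‖W.a₄‖ * ‖x‖ ≤ ‖x‖ := mul_le_of_le_one_left hx0 ha₄
      _ < ‖x‖ ^ 3 := by nlinarith
    have b6 : ‖-(W.a₆)‖ < ‖x‖ ^ 3 := by rw [norm_neg]; linarith
    have : ‖x‖ ^ 3 < ‖x‖ ^ 3 := by
      calc ‖x‖ ^ 3 = ‖x ^ 3‖ := (norm_pow x 3).symm
      _ < ‖x‖ ^ 3 := by
        rw [heq]
        exact na_add_lt hna (na_add_lt hna (na_add_lt hna (na_add_lt hna
          (na_add_lt hna b1 b2) b3) b4) b5) b6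
    exact lt_irrefl _ this
  linarith

private lemma y_cube_bound (hna : IsNonarchimedean (norm : K → ℝ))
    (ha₁ : ‖W.a₁‖ ≤ 1) (ha₂ : ‖W.a₂‖ ≤ 1) (ha₃ : ‖W.a₃‖ ≤ 1)
    (ha₄ : ‖W.a₄‖ ≤ 1) (ha₆ : ‖W.a₆‖ ≤ 1) {x y : K}
    (h : W.Equation x y) : ‖y‖ ^ 2 ≤ (max ‖x‖ 1) ^ 3 := by
  rcases le_or_gt ‖x‖ 1 with hx | hx
  · have h1 := y_small hna ha₁ ha₂ ha₃ ha₄ ha₆ h hx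
    rw [max_eq_right hx, one_pow]
    nlinarith [norm_nonneg y]
  · rw [max_eq_left hx.le, y_big hna ha₁ ha₂ ha₃ ha₄ ha₆ h hx]

end helpers


private lemma numeric_bounds {b c d l mu q : ℝ}
    (hb : 1 < b) (hc : 1 < c) (hd0 : 0 ≤ d) (hl0 : 0 ≤ l) (hmu0 : 0 ≤ mu) (hq0 : 0 ≤ q)
    (hda : d < min b c) (hl2 : l ^ 2 = c) (hq2 : q ^ 2 < (min b c) ^ 3)
    (hmu : mu ≤ max q (l * d)) :
    l < b * c ∧ mu < b * c ∧ l * mu < b * c := by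
  set a := min b c with ha
  have hab : a ≤ b := min_le_left _ _
  have hac : a ≤ c := min_le_right _ _
  have ha1 : 1 < a := lt_min hb hc
  have ha0 : (0:ℝ) < a := by linarith
  have hb0 : (0:ℝ) < b := by linarith
  have hc0 : (0:ℝ) < c := by linarith
  have hbc1 : 1 < b * c := by nlinarith
  have hbc0 : (0:ℝ) < b * c := by linarith
  have e1 : c < b * c := by nlinarith [mul_pos (sub_pos.mpr hb) hc0]
  have e2 : b * c < (b * c) ^ 2 := by nlinarith [mul_pos hbc0 (sub_pos.mpr hbc1)]
  have hLlt : l < b * c := by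
    refine lt_of_pow_lt_pow_left₀ 2 hbc0.le ?_
    rw [hl2]; linarith
  have had2 : d ^ 2 < a ^ 2 := by nlinarith [mul_pos (sub_pos.mpr hda) (show (0:ℝ) < a + d by linarith)]
  have ha2bc : a ^ 2 ≤ b * c := by nlinarith [mul_le_mul hab hac ha0.le hb0.le]
  have habc : a < b * c := lt_of_le_of_lt hac e1
  rcases le_total q (l * d) with hcase | hcase
  · -- mu ≤ l * d
    have hmd : mu ≤ l * d := le_trans hmu (max_le hcase le_rfl)
    have hld2 : (l * d) ^ 2 = c * d ^ 2 := by linear_combination d ^ 2 * hl2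
    have hmusq : mu ^ 2 ≤ c * d ^ 2 := by
      calc mu ^ 2 ≤ (l * d) ^ 2 := pow_le_pow_left₀ hmu0 hmd 2
      _ = c * d ^ 2 := hld2
    have hmult : mu < b * c := by
      refine lt_of_pow_lt_pow_left₀ 2 hbc0.le ?_
      calc mu ^ 2 ≤ c * d ^ 2 := hmusq
      _ < c * a ^ 2 := mul_lt_mul_of_pos_left had2 hc0
      _ ≤ c * (b * c) := mul_le_mul_of_nonneg_left ha2bc hc0.le
      _ < (b * c) ^ 2 := by nlinarith [mul_lt_mul_of_pos_right e1 hbc0]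
    refine ⟨hLlt, hmult, ?_⟩
    have h7 : l * mu ≤ l * (l * d) := mul_le_mul_of_nonneg_left hmd hl0
    have h8 : l * (l * d) = c * d := by linear_combination d * hl2
    calc l * mu ≤ c * d := by rw [← h8]; exact h7
    _ < c * a := mul_lt_mul_of_pos_left hda hc0
    _ ≤ c * b := mul_le_mul_of_nonneg_left hab hc0.le
    _ = b * c := mul_comm c b
  · -- mu ≤ q
    have hmq : mu ≤ q := le_trans hmu (max_le le_rfl hcase)
    have hmusq : mu ^ 2 ≤ q ^ 2 := pow_le_pow_left₀ hmu0 hmq 2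
    have ha3 : a ^ 3 < (b * c) ^ 2 := by
      calc a ^ 3 = a * a ^ 2 := by ring
      _ < (b * c) * a ^ 2 := mul_lt_mul_of_pos_right habc (pow_pos ha0 2)
      _ ≤ (b * c) * (b * c) := mul_le_mul_of_nonneg_left ha2bc hbc0.le
      _ = (b * c) ^ 2 := (sq (b * c)).symm
    have hmult : mu < b * c := by
      refine lt_of_pow_lt_pow_left₀ 2 hbc0.le ?_
      calc mu ^ 2 ≤ q ^ 2 := hmusq
      _ < a ^ 3 := hq2
      _ < (b * c) ^ 2 := ha3
    refine ⟨hLlt, hmult, ?_⟩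
    have ha2b2 : a ^ 2 ≤ b ^ 2 := by nlinarith [mul_le_mul hab hab ha0.le hb0.le]
    have ha3b2c : a ^ 3 ≤ b ^ 2 * c := by
      calc a ^ 3 = a ^ 2 * a := by ring
      _ ≤ b ^ 2 * c := mul_le_mul ha2b2 hac ha0.le (by positivity)
    refine lt_of_pow_lt_pow_left₀ 2 hbc0.le ?_
    calc (l * mu) ^ 2 = c * mu ^ 2 := by linear_combination mu ^ 2 * hl2
    _ ≤ c * q ^ 2 := mul_le_mul_of_nonneg_left hmusq hc0.le
    _ < c * a ^ 3 := mul_lt_mul_of_pos_left hq2 hc0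
    _ ≤ c * (b ^ 2 * c) := mul_le_mul_of_nonneg_left ha3b2c hc0.le
    _ = (b * c) ^ 2 := by ring

open Classical in
/-- Let `K` be a field complete with respect to a nontrivial
nonarchimedean absolute value, and let `W : y² + a₁xy + a₃y = x³ + a₂x² + a₄x + a₆` be a
Weierstrass curve over `K` with `‖aᵢ‖ ≤ 1` and `‖Δ‖ = 1` (good reduction). For distinct
affine points `P, Q ∈ W(K)` with `P − Q` affine, one has
`max(‖x(P − Q)‖, 1) ≥ min(max(‖x(P)‖, 1), max(‖x(Q)‖, 1))`; equivalently, for the local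
height `λ(R) = (1/2)·max(log‖x(R)‖, 0)` one has `λ(P − Q) ≥ min(λ(P), λ(Q))`. -/
theorem stmt_4 {K : Type*} [NontriviallyNormedField K] [CompleteSpace K]
    (hna : IsNonarchimedean (norm : K → ℝ))
    (W : WeierstrassCurve.Affine K)
    (ha₁ : ‖W.a₁‖ ≤ 1) (ha₂ : ‖W.a₂‖ ≤ 1) (ha₃ : ‖W.a₃‖ ≤ 1)
    (ha₄ : ‖W.a₄‖ ≤ 1) (ha₆ : ‖W.a₆‖ ≤ 1) (hΔ : ‖W.Δ‖ = 1)
    (x₁ y₁ x₂ y₂ x₃ y₃ : K)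
    (h₁ : W.Nonsingular x₁ y₁) (h₂ : W.Nonsingular x₂ y₂) (h₃ : W.Nonsingular x₃ y₃)
    (hne : WeierstrassCurve.Affine.Point.some x₁ y₁ h₁ ≠ WeierstrassCurve.Affine.Point.some x₂ y₂ h₂)
    (hsub : WeierstrassCurve.Affine.Point.some x₁ y₁ h₁ - WeierstrassCurve.Affine.Point.some x₂ y₂ h₂ =
      WeierstrassCurve.Affine.Point.some x₃ y₃ h₃) :
    min (max ‖x₁‖ 1) (max ‖x₂‖ 1) ≤ max ‖x₃‖ 1 ∧
      min ((1 / 2) * max (Real.log ‖x₁‖) 0) ((1 / 2) * max (Real.log ‖x₂‖) 0) ≤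
        (1 / 2) * max (Real.log ‖x₃‖) 0 := by
  have main : min (max ‖x₁‖ 1) (max ‖x₂‖ 1) ≤ max ‖x₃‖ 1 := by
    rcases le_or_gt ‖x₁‖ 1 with hb | hb
    · calc min (max ‖x₁‖ 1) (max ‖x₂‖ 1) ≤ max ‖x₁‖ 1 := min_le_left _ _
      _ = 1 := max_eq_right hb
      _ ≤ max ‖x₃‖ 1 := le_max_right _ _
    rcases le_or_gt ‖x₂‖ 1 with hc | hc
    · calc min (max ‖x₁‖ 1) (max ‖x₂‖ 1) ≤ max ‖x₂‖ 1 := min_le_right _ _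
      _ = 1 := max_eq_right hc
      _ ≤ max ‖x₃‖ 1 := le_max_right _ _
    by_contra hlt
    push_neg at hlt
    rw [max_eq_left hb.le, max_eq_left hc.le] at hlt
    have hd : ‖x₃‖ < min ‖x₁‖ ‖x₂‖ := lt_of_le_of_lt (le_max_left _ _) hlt
    have hne23 : x₂ ≠ x₃ := by
      intro h
      rw [h] at hd
      exact absurd hd (not_lt.mpr (min_le_right _ _))
    -- group law unfolding
    set y₂' := W.negY x₂ y₂ with hy₂'
    have h₂' : W.Nonsingular x₂ y₂' := (nonsingular_neg ..).mpr h₂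
    have hxy : x₁ = x₂ → y₁ ≠ W.negY x₂ y₂' := by
      intro hx hy
      rw [negY_negY] at hy
      exact hne (by subst hx; subst hy; rfl)
    have hadd : Point.some _ _ h₁ - Point.some _ _ h₂ = Point.some _ _ (nonsingular_add h₁ h₂' (fun h => hxy h.1 h.2)) := by
      rw [sub_eq_add_neg, neg_some]
      exact add_some (fun h => hxy h.1 h.2)
    have hsub' : Point.some _ _ (nonsingular_add h₁ h₂' (fun h => hxy h.1 h.2)) = Point.some _ _ h₃ := hadd.symm.trans hsub
    set L := W.slope x₁ x₂ y₁ y₂' with hL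
    have hX : W.addX x₁ x₂ L = x₃ ∧ W.addY x₁ x₂ y₁ L = y₃ := by
      have := hsub'
      injection this with hXa hYa
      exact ⟨hXa, hYa⟩
    set m := y₁ - L * x₁ with hm
    have hline₂ : y₂' = L * x₂ + m := by
      rcases eq_or_ne x₁ x₂ with hx | hx
      · have := Y_eq_of_X_eq h₁.1 h₂'.1 hx
        rcases this with hyy | hyy
        · rw [hm, ← hx, ← hyy]; ring
        · exact absurd hyy (hxy hx)
      · have hLs : L = (y₁ - y₂') / (x₁ - x₂) := by rw [hL, slope_of_X_ne hx]
        have hsub0 : x₁ - x₂ ≠ 0 := sub_ne_zero.mpr hx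
        have : L * (x₁ - x₂) = y₁ - y₂' := by
          rw [hLs]; field_simp
        rw [hm]; linear_combination this
    have hy3' : W.negY x₃ y₃ = L * x₃ + m := by
      rw [← hX.2, ← hX.1, addY, negY_negY, negAddY]; simp only [addX]; rw [hm]; ring
    have hE3 : W.Equation x₃ (L * x₃ + m) := by
      rw [← hy3']; exact (equation_neg ..).mpr h₃.1
    have hE2 : W.Equation x₂ (L * x₂ + m) := by rw [← hline₂]; exact h₂'.1
    have hXeq : x₃ = L ^ 2 + W.a₁ * L - W.a₂ - x₁ - x₂ := by rw [← hX.1]; rfl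
    have hE2' := (W.equation_iff x₂ (L * x₂ + m)).mp hE2
    have hE3' := (W.equation_iff x₃ (L * x₃ + m)).mp hE3
    have hfac : (x₂ - x₃) * (x₁ * x₂ + x₁ * x₃ + x₂ * x₃
        - (W.a₄ - 2 * L * m - W.a₁ * m - W.a₃ * L)) = 0 := by
      linear_combination hE2' - hE3' + ((x₂ - x₃) * (x₂ + x₃)) * hXeq
    have hkey : x₁ * x₂ = W.a₄ + -(2 * L * m) + -(W.a₁ * m) + -(W.a₃ * L)
        + -(x₃ * (x₁ + x₂)) := by
      rcases mul_eq_zero.mp hfac with h0 | h0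
      · exact absurd (sub_eq_zero.mp h0) hne23
      · linear_combination h0
    -- norms
    have hb0 : (0:ℝ) < ‖x₁‖ := lt_trans one_pos hb
    have hc0 : (0:ℝ) < ‖x₂‖ := lt_trans one_pos hc
    have hd0 : (0:ℝ) ≤ ‖x₃‖ := norm_nonneg _
    have hl0 : (0:ℝ) ≤ ‖L‖ := norm_nonneg _
    have hm0 : (0:ℝ) ≤ ‖m‖ := norm_nonneg _
    have hq0 : (0:ℝ) ≤ ‖L * x₃ + m‖ := norm_nonneg _
    have hp0 : (0:ℝ) ≤ ‖y₂'‖ := norm_nonneg _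
    have ha1 : (1:ℝ) < min ‖x₁‖ ‖x₂‖ := lt_min hb hc
    have ha0 : (0:ℝ) < min ‖x₁‖ ‖x₂‖ := lt_trans one_pos ha1
    have hab : min ‖x₁‖ ‖x₂‖ ≤ ‖x₁‖ := min_le_left _ _
    have hac : min ‖x₁‖ ‖x₂‖ ≤ ‖x₂‖ := min_le_right _ _
    have hbc1 : (1:ℝ) < ‖x₁‖ * ‖x₂‖ := by nlinarith
    have hbc0 : (0:ℝ) < ‖x₁‖ * ‖x₂‖ := lt_trans one_pos hbc1
    have hp2 : ‖y₂'‖ ^ 2 = ‖x₂‖ ^ 3 := y_big hna ha₁ ha₂ ha₃ ha₄ ha₆ h₂'.1 hc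
    have hq2 : ‖L * x₃ + m‖ ^ 2 ≤ (max ‖x₃‖ 1) ^ 3 :=
      y_cube_bound hna ha₁ ha₂ ha₃ ha₄ ha₆ hE3
    have hq2' : ‖L * x₃ + m‖ ^ 2 < (min ‖x₁‖ ‖x₂‖) ^ 3 := by
      refine lt_of_le_of_lt hq2 ?_
      exact pow_lt_pow_left₀ (max_lt hd ha1) (le_max_of_le_right zero_le_one) (by norm_num)
    have hqp : ‖L * x₃ + m‖ < ‖y₂'‖ := by
      refine lt_of_pow_lt_pow_left₀ 2 hp0 ?_
      calc ‖L * x₃ + m‖ ^ 2 < (min ‖x₁‖ ‖x₂‖) ^ 3 := hq2'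
      _ ≤ ‖x₂‖ ^ 3 := pow_le_pow_left₀ ha0.le hac 3
      _ = ‖y₂'‖ ^ 2 := hp2.symm
    have hsub23 : ‖x₂ - x₃‖ = ‖x₂‖ := by
      have h1 : x₂ - x₃ = x₂ + -x₃ := by ring
      rw [h1]
      exact na_eq hna (by rw [norm_neg]; exact lt_of_lt_of_le hd hac)
    have hLdiff : L * (x₂ - x₃) = y₂' + -(L * x₃ + m) := by linear_combination -hline₂
    have hlc : ‖L‖ * ‖x₂‖ = ‖y₂'‖ := by
      have hh1 : ‖L * (x₂ - x₃)‖ = ‖L‖ * ‖x₂‖ := by rw [norm_mul, hsub23]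
      have hh2 : ‖y₂' + -(L * x₃ + m)‖ = ‖y₂'‖ := na_eq hna (by rw [norm_neg]; exact hqp)
      rw [← hh1, hLdiff, hh2]
    have hl2 : ‖L‖ ^ 2 = ‖x₂‖ := by
      have hsq : (‖L‖ * ‖x₂‖) ^ 2 = ‖y₂'‖ ^ 2 := by rw [hlc]
      have h4 : ‖L‖ ^ 2 * ‖x₂‖ ^ 2 = ‖x₂‖ * ‖x₂‖ ^ 2 := by
        linear_combination hsq + hp2
      exact mul_right_cancel₀ (pow_ne_zero 2 (ne_of_gt hc0)) h4
    have hmu : ‖m‖ ≤ max ‖L * x₃ + m‖ (‖L‖ * ‖x₃‖) := by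
      have h5 : m = (L * x₃ + m) + -(L * x₃) := by ring
      calc ‖m‖ = ‖(L * x₃ + m) + -(L * x₃)‖ := by rw [← h5]
      _ ≤ max ‖L * x₃ + m‖ ‖-(L * x₃)‖ := hna _ _
      _ = max ‖L * x₃ + m‖ (‖L‖ * ‖x₃‖) := by rw [norm_neg, norm_mul]
    -- the three strict bounds involving L and m
    obtain ⟨hlbc, hmbc, hlmbc⟩ := numeric_bounds hb hc hd0 hl0 hm0 hq0 hd hl2 hq2' hmu
    have h2K : ‖(2:K)‖ ≤ 1 := by
      have h7 : (2:K) = 1 + 1 := by norm_num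
      rw [h7]
      have := hna (1:K) 1
      simpa using this
    have bA4 : ‖W.a₄‖ < ‖x₁‖ * ‖x₂‖ := lt_of_le_of_lt ha₄ hbc1
    have b2Lm : ‖-(2 * L * m)‖ < ‖x₁‖ * ‖x₂‖ := by
      rw [norm_neg, norm_mul, norm_mul]
      calc ‖(2:K)‖ * ‖L‖ * ‖m‖ ≤ ‖L‖ * ‖m‖ :=
        mul_le_mul_of_nonneg_right (mul_le_of_le_one_left hl0 h2K) hm0
      _ < ‖x₁‖ * ‖x₂‖ := hlmbc
    have bA1m : ‖-(W.a₁ * m)‖ < ‖x₁‖ * ‖x₂‖ := by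
      rw [norm_neg, norm_mul]
      exact lt_of_le_of_lt (mul_le_of_le_one_left hm0 ha₁) hmbc
    have bA3L : ‖-(W.a₃ * L)‖ < ‖x₁‖ * ‖x₂‖ := by
      rw [norm_neg, norm_mul]
      exact lt_of_le_of_lt (mul_le_of_le_one_left hl0 ha₃) hlbc
    have bX3 : ‖-(x₃ * (x₁ + x₂))‖ < ‖x₁‖ * ‖x₂‖ := by
      rw [norm_neg, norm_mul]
      have h8 : ‖x₁ + x₂‖ ≤ max ‖x₁‖ ‖x₂‖ := hna _ _
      have h9 : (0:ℝ) < max ‖x₁‖ ‖x₂‖ := lt_of_lt_of_le hb0 (le_max_left _ _)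
      calc ‖x₃‖ * ‖x₁ + x₂‖ ≤ ‖x₃‖ * max ‖x₁‖ ‖x₂‖ := mul_le_mul_of_nonneg_left h8 hd0
      _ < min ‖x₁‖ ‖x₂‖ * max ‖x₁‖ ‖x₂‖ := mul_lt_mul_of_pos_right hd h9
      _ = ‖x₁‖ * ‖x₂‖ := min_mul_max _ _
    have hcontra : ‖x₁‖ * ‖x₂‖ < ‖x₁‖ * ‖x₂‖ := by
      calc ‖x₁‖ * ‖x₂‖ = ‖x₁ * x₂‖ := (norm_mul _ _).symm
      _ = ‖W.a₄ + -(2 * L * m) + -(W.a₁ * m) + -(W.a₃ * L) + -(x₃ * (x₁ + x₂))‖ := by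
          rw [hkey]
      _ < ‖x₁‖ * ‖x₂‖ := na_add_lt hna (na_add_lt hna (na_add_lt hna
          (na_add_lt hna bA4 b2Lm) bA1m) bA3L) bX3
    exact absurd hcontra (lt_irrefl _)
  refine ⟨main, ?_⟩
  have lam_mono : ∀ u v : K, max ‖u‖ 1 ≤ max ‖v‖ 1 →
      (1 / 2) * max (Real.log ‖u‖) 0 ≤ (1 / 2) * max (Real.log ‖v‖) 0 := by
    intro u v h
    have e : ∀ w : K, max (Real.log ‖w‖) 0 = Real.log (max ‖w‖ 1) := by
      intro w
      rcases le_total ‖w‖ 1 with hw | hw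
      · rw [max_eq_right hw, max_eq_right (Real.log_nonpos (norm_nonneg w) hw), Real.log_one]
      · rw [max_eq_left hw, max_eq_left (Real.log_nonneg hw)]
    rw [e u, e v]
    have h1 : Real.log (max ‖u‖ 1) ≤ Real.log (max ‖v‖ 1) :=
      Real.log_le_log (by positivity) h
    linarith
  rcases le_total (max ‖x₁‖ 1) (max ‖x₂‖ 1) with h12 | h12
  · have hA : max ‖x₁‖ 1 ≤ max ‖x₃‖ 1 := by rwa [min_eq_left h12] at main
    exact le_trans (min_le_left _ _) (lam_mono x₁ x₃ hA)
  · have hA : max ‖x₂‖ 1 ≤ max ‖x₃‖ 1 := by rwa [min_eq_right h12] at main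
    exact le_trans (min_le_right _ _) (lam_mono x₂ x₃ hA)
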